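/- For all real numbers h1, h2, P with 0 < h1 ≤ h2 and P > 0, and every ρ ∈ [0, 1), setting N(ρ) := h1 + h2 − 2ρ·√(h1·h2), the quantity h_{12,P}(ρ) := N(ρ)/(1 − ρ² + P·N(ρ)) satisfies h_{12,P}(ρ) ≥ h2/(1 + h2·P). Moreover, if h1 < h2, equality holds if and only if ρ = √(h1/h2). -/

import Mathlib

/-- Minimization over the noise correlation `ρ ∈ [0,1)` of
`h_{12,P}(ρ) := N(ρ)/(1 − ρ² + P·N(ρ))` with `N(ρ) := h1 + h2 − 2ρ√(h1h2)`:
it is always at least `h2/(1 + h2·P)`, and (when `h1 < h2`) equality holds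
iff `ρ = √(h1/h2)`. -/
theorem sato_h12P_min (h1 h2 P : ℝ) (hh1 : 0 < h1) (h12 : h1 ≤ h2) (hP : 0 < P) :
    ∀ ρ : ℝ, 0 ≤ ρ → ρ < 1 →
      h2 / (1 + h2 * P) ≤
        (h1 + h2 - 2 * ρ * Real.sqrt (h1 * h2)) /
          (1 - ρ ^ 2 + P * (h1 + h2 - 2 * ρ * Real.sqrt (h1 * h2))) ∧
      (h1 < h2 →
        ((h1 + h2 - 2 * ρ * Real.sqrt (h1 * h2)) /
            (1 - ρ ^ 2 + P * (h1 + h2 - 2 * ρ * Real.sqrt (h1 * h2))) =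
          h2 / (1 + h2 * P) ↔ ρ = Real.sqrt (h1 / h2))) := by
  intro ρ hρ0 hρ1
  have hh2 : 0 < h2 := lt_of_lt_of_le hh1 h12
  set a := Real.sqrt h1 with ha_def
  set b := Real.sqrt h2 with hb_def
  have ha0 : 0 < a := Real.sqrt_pos.mpr hh1
  have hb0 : 0 < b := Real.sqrt_pos.mpr hh2
  have ha2 : a ^ 2 = h1 := Real.sq_sqrt hh1.le
  have hb2 : b ^ 2 = h2 := Real.sq_sqrt hh2.le
  have hab : Real.sqrt (h1 * h2) = a * b := Real.sqrt_mul hh1.le h2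
  have hsq : Real.sqrt (h1 / h2) = a / b := Real.sqrt_div hh1.le h2
  rw [hab]
  have hN : 0 < h1 + h2 - 2 * ρ * (a * b) := by
    nlinarith [mul_pos ha0 hb0, sq_nonneg (a - b)]
  have hD : 0 < 1 - ρ ^ 2 + P * (h1 + h2 - 2 * ρ * (a * b)) := by
    nlinarith [mul_pos hP hN]
  have hE : 0 < 1 + h2 * P := by positivity
  have key : (h1 + h2 - 2 * ρ * (a * b)) * (1 + h2 * P)
      - h2 * (1 - ρ ^ 2 + P * (h1 + h2 - 2 * ρ * (a * b))) = (a - ρ * b) ^ 2 := by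
    rw [← ha2, ← hb2]; ring
  constructor
  · rw [div_le_div_iff₀ hE hD]
    nlinarith [sq_nonneg (a - ρ * b)]
  · intro _
    rw [div_eq_div_iff hD.ne' hE.ne', hsq]
    constructor
    · intro h
      have h0 : (a - ρ * b) ^ 2 = 0 := by nlinarith
      have : a - ρ * b = 0 := by
        exact pow_eq_zero_iff (n := 2) (by norm_num) |>.mp h0
      field_simp
      linarith [this]
    · intro h
      have hρb : a - ρ * b = 0 := by
        rw [h]; field_simp; ring
      nlinarith [hρb]
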